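/- Consider a budget-additive SPLC utility on m goods: for each good j there are k_j segments with lengths d_{jt} > 0 and strictly decreasing rates u_{j1} > u_{j2} > … > u_{j k_j} ≥ 0, and a cap U > 0; for b > 0 and prices p ∈ ℝ_{>0}^m let G(p) denote the set of optimal solutions of: maximize b·log(Σ_j Σ_t u_{jt} x_{jt}) − Σ_j p_j Σ_t x_{jt} subject to 0 ≤ x_{jt} ≤ d_{jt} for all j, t, and Σ_j Σ_t u_{jt} x_{jt} ≤ U. Then this Gale demand system satisfies the weak gross substitutes property: for any p' ∈ ℝ_{>0}^m with p' ≥ p componentwise and any x ∈ G(p), there exists x' ∈ G(p') such that x'_{jt} ≥ x_{jt} for every segment (j,t) of every good j with p'_j = p_j. -/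

import Mathlib

open Finset

/-- The Gale demand system of a budget-additive SPLC utility: the set of optimal
solutions of `max b·log(Σ_j Σ_t u_{jt} x_{jt}) − Σ_j p_j Σ_t x_{jt}` subject to
`0 ≤ x_{jt} ≤ d_{jt}` and `Σ_j Σ_t u_{jt} x_{jt} ≤ U`. -/
def splcGale (m : ℕ) (k : Fin m → ℕ) (d uu : ∀ j : Fin m, Fin (k j) → ℝ)
    (U b : ℝ) (p : Fin m → ℝ) : Set (∀ j : Fin m, Fin (k j) → ℝ) :=
  {x | (∀ j t, 0 ≤ x j t ∧ x j t ≤ d j t) ∧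
    (∑ j, ∑ t, uu j t * x j t ≤ U) ∧ (0 < ∑ j, ∑ t, uu j t * x j t) ∧
    ∀ y : ∀ j : Fin m, Fin (k j) → ℝ, (∀ j t, 0 ≤ y j t ∧ y j t ≤ d j t) →
      (∑ j, ∑ t, uu j t * y j t ≤ U) → (0 < ∑ j, ∑ t, uu j t * y j t) →
      b * Real.log (∑ j, ∑ t, uu j t * y j t) - ∑ j, p j * ∑ t, y j t ≤
        b * Real.log (∑ j, ∑ t, uu j t * x j t) - ∑ j, p j * ∑ t, x j t}

section
variable {m : ℕ} {k : Fin m → ℕ}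

lemma sum_sum_eq (f : ∀ j : Fin m, Fin (k j) → ℝ) :
    ∑ j, ∑ t, f j t = ∑ s : (j : Fin m) × Fin (k j), f s.1 s.2 := by
  rw [← Finset.univ_sigma_univ, Finset.sum_sigma]

lemma price_sum_eq (q : Fin m → ℝ) (y : ∀ j : Fin m, Fin (k j) → ℝ) :
    ∑ j, q j * ∑ t, y j t = ∑ j, ∑ t, (fun j (_ : Fin (k j)) => q j) j t * y j t := by
  exact Finset.sum_congr rfl (fun j _ => by rw [Finset.mul_sum])

lemma log_sub_log_le {a c : ℝ} (ha : 0 < a) (hc : 0 < c) :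
    Real.log a - Real.log c ≤ (a - c) / c := by
  have h := Real.log_le_sub_one_of_pos (show (0:ℝ) < a / c by positivity)
  rw [Real.log_div (ne_of_gt ha) (ne_of_gt hc)] at h
  have : a / c - 1 = (a - c) / c := by field_simp
  linarith [this ▸ h]

lemma sum_update_one (x c : ∀ j : Fin m, Fin (k j) → ℝ)
    (s₀ : (j : Fin m) × Fin (k j)) (a : ℝ) :
    ∑ j, ∑ t, c j t * (if (⟨j, t⟩ : (j : Fin m) × Fin (k j)) = s₀ then a else x j t)
      = (∑ j, ∑ t, c j t * x j t) + c s₀.1 s₀.2 * (a - x s₀.1 s₀.2) := by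
  rw [sum_sum_eq (fun j t => c j t * (if (⟨j, t⟩ : (j : Fin m) × Fin (k j)) = s₀ then a else x j t)),
    sum_sum_eq (fun j t => c j t * x j t)]
  have : ∀ s : (j : Fin m) × Fin (k j),
      c s.1 s.2 * (if s = s₀ then a else x s.1 s.2)
        = c s.1 s.2 * x s.1 s.2 + (if s = s₀ then c s₀.1 s₀.2 * (a - x s₀.1 s₀.2) else 0) := by
    intro s
    by_cases h : s = s₀
    · subst h; simp; ring
    · simp [h]
  calc ∑ s : (j : Fin m) × Fin (k j), c s.1 s.2 * (if s = s₀ then a else x s.1 s.2)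
      = ∑ s : (j : Fin m) × Fin (k j), (c s.1 s.2 * x s.1 s.2
          + (if s = s₀ then c s₀.1 s₀.2 * (a - x s₀.1 s₀.2) else 0)) := by
        exact Finset.sum_congr rfl (fun s _ => this s)
    _ = _ := by rw [Finset.sum_add_distrib, Finset.sum_ite_eq' Finset.univ s₀]
                simp

lemma sum_update_two (x c : ∀ j : Fin m, Fin (k j) → ℝ)
    (s₁ s₂ : (j : Fin m) × Fin (k j)) (h12 : s₁ ≠ s₂) (a₁ a₂ : ℝ) :
    ∑ j, ∑ t, c j t * (if (⟨j, t⟩ : (j : Fin m) × Fin (k j)) = s₁ then a₁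
        else if (⟨j, t⟩ : (j : Fin m) × Fin (k j)) = s₂ then a₂ else x j t)
      = (∑ j, ∑ t, c j t * x j t) + c s₁.1 s₁.2 * (a₁ - x s₁.1 s₁.2)
          + c s₂.1 s₂.2 * (a₂ - x s₂.1 s₂.2) := by
  rw [sum_sum_eq (fun j t => c j t * (if (⟨j, t⟩ : (j : Fin m) × Fin (k j)) = s₁ then a₁
        else if (⟨j, t⟩ : (j : Fin m) × Fin (k j)) = s₂ then a₂ else x j t)),
    sum_sum_eq (fun j t => c j t * x j t)]
  have : ∀ s : (j : Fin m) × Fin (k j),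
      c s.1 s.2 * (if s = s₁ then a₁ else if s = s₂ then a₂ else x s.1 s.2)
        = c s.1 s.2 * x s.1 s.2 + (if s = s₁ then c s₁.1 s₁.2 * (a₁ - x s₁.1 s₁.2) else 0)
          + (if s = s₂ then c s₂.1 s₂.2 * (a₂ - x s₂.1 s₂.2) else 0) := by
    intro s
    by_cases h1 : s = s₁
    · subst h1; simp [h12]; ring
    · by_cases h2 : s = s₂
      · subst h2; simp [h1]; ring
      · simp [h1, h2]
  calc (∑ s : (j : Fin m) × Fin (k j),
        c s.1 s.2 * (if s = s₁ then a₁ else if s = s₂ then a₂ else x s.1 s.2))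
      = ∑ s : (j : Fin m) × Fin (k j), (c s.1 s.2 * x s.1 s.2
          + (if s = s₁ then c s₁.1 s₁.2 * (a₁ - x s₁.1 s₁.2) else 0)
          + (if s = s₂ then c s₂.1 s₂.2 * (a₂ - x s₂.1 s₂.2) else 0)) := by
        exact Finset.sum_congr rfl (fun s _ => this s)
    _ = _ := by rw [Finset.sum_add_distrib, Finset.sum_add_distrib,
                  Finset.sum_ite_eq' Finset.univ s₁, Finset.sum_ite_eq' Finset.univ s₂]
                simp
end
section
variable {m : ℕ} {k : Fin m → ℕ}

lemma kkt_sufficient (d uu : ∀ j : Fin m, Fin (k j) → ℝ)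
    {U b : ℝ} (hU : 0 < U) (hb : 0 < b) (q : Fin m → ℝ)
    (x : ∀ j : Fin m, Fin (k j) → ℝ) (lam : ℝ) (hlam0 : 0 ≤ lam)
    (hfeas : ∀ j t, 0 ≤ x j t ∧ x j t ≤ d j t)
    (hvle : ∑ j, ∑ t, uu j t * x j t ≤ U)
    (hvpos : 0 < ∑ j, ∑ t, uu j t * x j t)
    (hlam1 : ∀ j t, q j < lam * uu j t → x j t = d j t)
    (hlam2 : ∀ j t, lam * uu j t < q j → x j t = 0)
    (hlamv : lam * (∑ j, ∑ t, uu j t * x j t) ≤ b)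
    (hlamv2 : (∑ j, ∑ t, uu j t * x j t) < U → lam * (∑ j, ∑ t, uu j t * x j t) = b) :
    x ∈ splcGale m k d uu U b q := by
  refine ⟨hfeas, hvle, hvpos, ?_⟩
  intro y hy hyU hypos
  set vx := ∑ j, ∑ t, uu j t * x j t with hvx
  set vy := ∑ j, ∑ t, uu j t * y j t with hvy
  -- log bound
  have hlog : b * Real.log vy - b * Real.log vx ≤ b / vx * (vy - vx) := by
    have h := log_sub_log_le hypos hvpos
    have hbnn : (0:ℝ) ≤ b := le_of_lt hb
    calc b * Real.log vy - b * Real.log vx = b * (Real.log vy - Real.log vx) := by ring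
      _ ≤ b * ((vy - vx) / vx) := by
          exact mul_le_mul_of_nonneg_left h hbnn
      _ = b / vx * (vy - vx) := by ring
  -- curvature term
  have hcurv : b / vx * (vy - vx) ≤ lam * (vy - vx) := by
    have h1 : lam ≤ b / vx := (le_div_iff₀ hvpos).mpr hlamv
    rcases lt_or_eq_of_le hvle with hlt | heq
    · have : lam = b / vx := by
        have := hlamv2 hlt
        field_simp [ne_of_gt hvpos]
        linarith [this]
      rw [this]
    · have hyx : vy - vx ≤ 0 := by rw [heq]; linarith
      nlinarith [h1, hyx]
  -- price term
  have hprice : lam * (vy - vx) - (∑ j, q j * ∑ t, y j t) + (∑ j, q j * ∑ t, x j t) ≤ 0 := by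
    have e1 : ∀ z : ∀ j : Fin m, Fin (k j) → ℝ,
        (∑ j, q j * ∑ t, z j t) = ∑ s : (j : Fin m) × Fin (k j), q s.1 * z s.1 s.2 := by
      intro z
      rw [← sum_sum_eq (fun j t => q j * z j t)]
      exact Finset.sum_congr rfl (fun j _ => by rw [Finset.mul_sum])
    have e2 : lam * (vy - vx) = ∑ s : (j : Fin m) × Fin (k j),
        lam * uu s.1 s.2 * (y s.1 s.2 - x s.1 s.2) := by
      rw [hvx, hvy, sum_sum_eq (fun j t => uu j t * y j t),
        sum_sum_eq (fun j t => uu j t * x j t)]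
      rw [← Finset.sum_sub_distrib, Finset.mul_sum]
      exact Finset.sum_congr rfl (fun s _ => by ring)
    rw [e1, e1, e2, ← Finset.sum_sub_distrib, ← Finset.sum_add_distrib]
    apply Finset.sum_nonpos
    intro s _
    have htri := lt_trichotomy (q s.1) (lam * uu s.1 s.2)
    rcases htri with h | h | h
    · have hxd := hlam1 s.1 s.2 h
      have hyd := (hy s.1 s.2).2
      nlinarith [hxd, hyd]
    · rw [← h]; ring_nf; nlinarith [h]
    · have hx0 := hlam2 s.1 s.2 h
      have hy0 := (hy s.1 s.2).1
      nlinarith [hx0, hy0]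
  linarith [hlog, hcurv, hprice]

end
section
variable {m : ℕ} {k : Fin m → ℕ}

lemma opt_full (d uu : ∀ j : Fin m, Fin (k j) → ℝ)
    {U b : ℝ} (hb : 0 < b) (q : Fin m → ℝ) (hq : ∀ j, 0 < q j)
    (x : ∀ j : Fin m, Fin (k j) → ℝ) (hx : x ∈ splcGale m k d uu U b q)
    (hvU : ∑ j, ∑ t, uu j t * x j t < U)
    (j : Fin m) (t : Fin (k j))
    (h : q j * (∑ j, ∑ t, uu j t * x j t) < b * uu j t) : x j t = d j t := by
  obtain ⟨hfeas, hvle, hvpos, hopt⟩ := hx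
  set v := ∑ j, ∑ t, uu j t * x j t with hv
  set u := uu j t with hu
  have hqj := hq j
  have hupos : 0 < u := by nlinarith [mul_pos hqj hvpos]
  by_contra hne
  have hxd : x j t < d j t := lt_of_le_of_ne (hfeas j t).2 hne
  set ε := min (d j t - x j t) (min ((U - v) / (2 * u)) ((b * u - q j * v) / (2 * (q j * u)))) with hε
  have hεpos : 0 < ε := by
    apply lt_min (by linarith)
    apply lt_min
    · exact div_pos (by linarith) (by positivity)
    · exact div_pos (by linarith) (by positivity)
  have hε1 : ε ≤ d j t - x j t := min_le_left _ _
  have hε2 : u * ε ≤ (U - v) / 2 := by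
    have h2 : ε ≤ (U - v) / (2 * u) := le_trans (min_le_right _ _) (min_le_left _ _)
    calc u * ε ≤ u * ((U - v) / (2 * u)) := by nlinarith
      _ = (U - v) / 2 := by field_simp
  have hε3 : q j * (u * ε) ≤ (b * u - q j * v) / 2 := by
    have h3 : ε ≤ (b * u - q j * v) / (2 * (q j * u)) :=
      le_trans (min_le_right _ _) (min_le_right _ _)
    have h4 := mul_le_mul_of_nonneg_left h3 (le_of_lt (mul_pos hqj hupos))
    calc q j * (u * ε) = q j * u * ε := by ring
      _ ≤ q j * u * ((b * u - q j * v) / (2 * (q j * u))) := h4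
      _ = (b * u - q j * v) / 2 := by field_simp
  set s₀ : (j : Fin m) × Fin (k j) := ⟨j, t⟩ with hs₀
  set y : ∀ j : Fin m, Fin (k j) → ℝ :=
    fun j' t' => if (⟨j', t'⟩ : (j : Fin m) × Fin (k j)) = s₀ then x j t + ε else x j' t' with hy
  have hvy : ∑ j, ∑ t, uu j t * y j t = v + u * ε := by
    rw [hy, sum_update_one x uu s₀ (x j t + ε)]
    show _ + u * (x j t + ε - x j t) = _; ring
  have hpy : ∑ j', q j' * ∑ t', y j' t' = (∑ j', q j' * ∑ t', x j' t') + q j * ε := by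
    rw [price_sum_eq, hy, sum_update_one x (fun j (_ : Fin (k j)) => q j) s₀ (x j t + ε),
      ← price_sum_eq]
    show _ + q j * (x j t + ε - x j t) = _; ring
  have hyfeas : ∀ j' t', 0 ≤ y j' t' ∧ y j' t' ≤ d j' t' := by
    intro j' t'
    by_cases hc : (⟨j', t'⟩ : (j : Fin m) × Fin (k j)) = s₀
    · rw [hs₀] at hc
      obtain ⟨e1, e2⟩ := Sigma.mk.inj_iff.mp hc
      subst e1
      have e2' : t' = t := eq_of_heq e2
      subst e2'
      have hy1 : y j' t' = x j' t' + ε := by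
        rw [hy]; exact if_pos hs₀.symm
      rw [hy1]
      have := (hfeas j' t').1
      constructor <;> linarith
    · have hy2 : y j' t' = x j' t' := by rw [hy]; simp only [if_neg hc]
      rw [hy2]; exact hfeas j' t'
  have hyU : ∑ j, ∑ t, uu j t * y j t ≤ U := by rw [hvy]; linarith
  have hypos : 0 < ∑ j, ∑ t, uu j t * y j t := by rw [hvy]; positivity
  have hle := hopt y hyfeas hyU hypos
  rw [hvy, hpy] at hle
  have hlog : Real.log (v + u * ε) - Real.log v ≥ u * ε / (v + u * ε) := by
    have := log_sub_log_le hvpos (show (0:ℝ) < v + u * ε by positivity)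
    have e : (v - (v + u * ε)) / (v + u * ε) = -(u * ε / (v + u * ε)) := by ring
    rw [e] at this
    linarith
  have hkey : q j * ε < b * (u * ε) / (v + u * ε) := by
    rw [lt_div_iff₀ (by positivity)]
    nlinarith
  have hfin : b * Real.log (v + u * ε) - b * Real.log v ≥ b * (u * ε) / (v + u * ε) := by
    have := mul_le_mul_of_nonneg_left hlog (le_of_lt hb)
    calc b * Real.log (v + u * ε) - b * Real.log v
        = b * (Real.log (v + u * ε) - Real.log v) := by ring
      _ ≥ b * (u * ε / (v + u * ε)) := this
      _ = b * (u * ε) / (v + u * ε) := by ring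
  linarith

end
section
variable {m : ℕ} {k : Fin m → ℕ}

lemma opt_zero (d uu : ∀ j : Fin m, Fin (k j) → ℝ) (hu0 : ∀ j t, 0 ≤ uu j t)
    {U b : ℝ} (hb : 0 < b) (q : Fin m → ℝ) (hq : ∀ j, 0 < q j)
    (x : ∀ j : Fin m, Fin (k j) → ℝ) (hx : x ∈ splcGale m k d uu U b q)
    (j : Fin m) (t : Fin (k j))
    (h : b * uu j t < q j * (∑ j, ∑ t, uu j t * x j t)) : x j t = 0 := by
  obtain ⟨hfeas, hvle, hvpos, hopt⟩ := hx
  set v := ∑ j, ∑ t, uu j t * x j t with hv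
  set u := uu j t with hu
  have hqj := hq j
  have hu0' : 0 ≤ u := hu0 j t
  by_contra hne
  have hxpos : 0 < x j t := lt_of_le_of_ne (hfeas j t).1 (Ne.symm hne)
  set ε := min (x j t) ((q j * v - b * u) / (2 * (q j * (u + 1)))) with hε
  have hεpos : 0 < ε := by
    apply lt_min hxpos
    exact div_pos (by linarith) (by positivity)
  have hε1 : ε ≤ x j t := min_le_left _ _
  have hkey : b * u < q j * (v - u * ε) := by
    have h3 : ε ≤ (q j * v - b * u) / (2 * (q j * (u + 1))) := min_le_right _ _
    have h4 : q j * (u * ε) ≤ (q j * v - b * u) / 2 := by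
      have h5 := mul_le_mul_of_nonneg_left h3
        (le_of_lt (mul_pos hqj (show (0:ℝ) < u + 1 by linarith)))
      calc q j * (u * ε) ≤ q j * ((u + 1) * ε) := by nlinarith
        _ = q j * (u + 1) * ε := by ring
        _ ≤ q j * (u + 1) * ((q j * v - b * u) / (2 * (q j * (u + 1)))) := h5
        _ = (q j * v - b * u) / 2 := by field_simp
    nlinarith
  have hvme : 0 < v - u * ε := by nlinarith [mul_nonneg (le_of_lt hb) hu0']
  set s₀ : (j : Fin m) × Fin (k j) := ⟨j, t⟩ with hs₀
  set y : ∀ j : Fin m, Fin (k j) → ℝ :=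
    fun j' t' => if (⟨j', t'⟩ : (j : Fin m) × Fin (k j)) = s₀ then x j t - ε else x j' t' with hy
  have hvy : ∑ j, ∑ t, uu j t * y j t = v - u * ε := by
    rw [hy, sum_update_one x uu s₀ (x j t - ε)]
    show _ + u * (x j t - ε - x j t) = _; ring
  have hpy : ∑ j', q j' * ∑ t', y j' t' = (∑ j', q j' * ∑ t', x j' t') - q j * ε := by
    rw [price_sum_eq, hy, sum_update_one x (fun j (_ : Fin (k j)) => q j) s₀ (x j t - ε),
      ← price_sum_eq]
    simp [hs₀]; ring
  have hyfeas : ∀ j' t', 0 ≤ y j' t' ∧ y j' t' ≤ d j' t' := by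
    intro j' t'
    by_cases hc : (⟨j', t'⟩ : (j : Fin m) × Fin (k j)) = s₀
    · rw [hs₀] at hc
      obtain ⟨e1, e2⟩ := Sigma.mk.inj_iff.mp hc
      subst e1
      have e2' : t' = t := eq_of_heq e2
      subst e2'
      have hy1 : y j' t' = x j' t' - ε := by rw [hy]; exact if_pos hs₀.symm
      rw [hy1]
      have := (hfeas j' t').2
      constructor <;> linarith
    · have hy2 : y j' t' = x j' t' := by rw [hy]; simp only [if_neg hc]
      rw [hy2]; exact hfeas j' t'
  have hyU : ∑ j, ∑ t, uu j t * y j t ≤ U := by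
    rw [hvy]; nlinarith [mul_nonneg hu0' (le_of_lt hεpos)]
  have hypos : 0 < ∑ j, ∑ t, uu j t * y j t := by rw [hvy]; exact hvme
  have hle := hopt y hyfeas hyU hypos
  rw [hvy, hpy] at hle
  have hlog : Real.log v - Real.log (v - u * ε) ≤ u * ε / (v - u * ε) := by
    have h' := log_sub_log_le hvpos hvme
    have e : (v - (v - u * ε)) / (v - u * ε) = u * ε / (v - u * ε) := by ring
    rw [e] at h'; exact h'
  have hkey2 : b * (u * ε) / (v - u * ε) < q j * ε := by
    rw [div_lt_iff₀ hvme]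
    nlinarith
  have hfin : b * Real.log v - b * Real.log (v - u * ε) ≤ b * (u * ε) / (v - u * ε) := by
    have := mul_le_mul_of_nonneg_left hlog (le_of_lt hb)
    calc b * Real.log v - b * Real.log (v - u * ε)
        = b * (Real.log v - Real.log (v - u * ε)) := by ring
      _ ≤ b * (u * ε / (v - u * ε)) := this
      _ = b * (u * ε) / (v - u * ε) := by ring
  linarith

lemma opt_noexch (d uu : ∀ j : Fin m, Fin (k j) → ℝ) (hu0 : ∀ j t, 0 ≤ uu j t)
    {U b : ℝ} (hb : 0 < b) (q : Fin m → ℝ) (hq : ∀ j, 0 < q j)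
    (x : ∀ j : Fin m, Fin (k j) → ℝ) (hx : x ∈ splcGale m k d uu U b q)
    (s₁ s₂ : (j : Fin m) × Fin (k j)) (h12 : s₁ ≠ s₂)
    (hx1 : 0 < x s₁.1 s₁.2) (hx2 : x s₂.1 s₂.2 < d s₂.1 s₂.2)
    (hu2 : 0 < uu s₂.1 s₂.2) :
    q s₁.1 * uu s₂.1 s₂.2 ≤ q s₂.1 * uu s₁.1 s₁.2 := by
  obtain ⟨hfeas, hvle, hvpos, hopt⟩ := hx
  set v := ∑ j, ∑ t, uu j t * x j t with hv
  by_contra hgt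
  push_neg at hgt
  set u₁ := uu s₁.1 s₁.2 with hu1
  set u₂ := uu s₂.1 s₂.2 with hu2'
  have hu1' : 0 ≤ u₁ := hu0 s₁.1 s₁.2
  set ε := min (x s₁.1 s₁.2) ((d s₂.1 s₂.2 - x s₂.1 s₂.2) * u₂ / (u₁ + 1)) with hε
  have hεpos : 0 < ε := by
    apply lt_min hx1
    exact div_pos (by nlinarith) (by linarith)
  have hε1 : ε ≤ x s₁.1 s₁.2 := min_le_left _ _
  set δ := ε * u₁ / u₂ with hδ
  have hδ0 : 0 ≤ δ := by positivity
  have hδd : δ ≤ d s₂.1 s₂.2 - x s₂.1 s₂.2 := by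
    have h3 : ε ≤ (d s₂.1 s₂.2 - x s₂.1 s₂.2) * u₂ / (u₁ + 1) := min_le_right _ _
    rw [hδ, div_le_iff₀ hu2]
    calc ε * u₁ ≤ ((d s₂.1 s₂.2 - x s₂.1 s₂.2) * u₂ / (u₁ + 1)) * u₁ := by nlinarith
      _ ≤ (d s₂.1 s₂.2 - x s₂.1 s₂.2) * u₂ := by
          rw [div_mul_eq_mul_div, div_le_iff₀ (show (0:ℝ) < u₁ + 1 by linarith)]
          nlinarith
  have hδu : u₂ * δ = u₁ * ε := by rw [hδ]; field_simp
  set y : ∀ j : Fin m, Fin (k j) → ℝ :=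
    fun j' t' => if (⟨j', t'⟩ : (j : Fin m) × Fin (k j)) = s₁ then x s₁.1 s₁.2 - ε
      else if (⟨j', t'⟩ : (j : Fin m) × Fin (k j)) = s₂ then x s₂.1 s₂.2 + δ else x j' t' with hy
  have hvy : ∑ j, ∑ t, uu j t * y j t = v := by
    rw [hy, sum_update_two x uu s₁ s₂ h12 (x s₁.1 s₁.2 - ε) (x s₂.1 s₂.2 + δ)]
    simp only [← hu1, ← hu2', ← hv]
    have : u₁ * (x s₁.1 s₁.2 - ε - x s₁.1 s₁.2) + u₂ * (x s₂.1 s₂.2 + δ - x s₂.1 s₂.2) = 0 := by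
      have : u₁ * (-ε) + u₂ * δ = 0 := by rw [hδu]; ring
      nlinarith [this]
    linarith [this]
  have hpy : ∑ j', q j' * ∑ t', y j' t'
      = (∑ j', q j' * ∑ t', x j' t') - q s₁.1 * ε + q s₂.1 * δ := by
    rw [price_sum_eq, hy,
      sum_update_two x (fun j (_ : Fin (k j)) => q j) s₁ s₂ h12 (x s₁.1 s₁.2 - ε) (x s₂.1 s₂.2 + δ),
      ← price_sum_eq]
    ring
  have hyfeas : ∀ j' t', 0 ≤ y j' t' ∧ y j' t' ≤ d j' t' := by
    intro j' t'
    by_cases hc1 : (⟨j', t'⟩ : (j : Fin m) × Fin (k j)) = s₁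
    · have hy1 : y j' t' = x s₁.1 s₁.2 - ε := by rw [hy]; simp only [if_pos hc1]
      have e1 : j' = s₁.1 := congrArg Sigma.fst hc1
      subst e1
      have e2 : t' = s₁.2 := by
        have := (Sigma.mk.inj_iff.mp hc1).2
        exact eq_of_heq this
      subst e2
      rw [hy1]
      have := (hfeas s₁.1 s₁.2).2
      constructor <;> [linarith; linarith]
    · by_cases hc2 : (⟨j', t'⟩ : (j : Fin m) × Fin (k j)) = s₂
      · have hy2 : y j' t' = x s₂.1 s₂.2 + δ := by rw [hy]; simp only [if_neg hc1, if_pos hc2]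
        have e1 : j' = s₂.1 := congrArg Sigma.fst hc2
        subst e1
        have e2 : t' = s₂.2 := by
          have := (Sigma.mk.inj_iff.mp hc2).2
          exact eq_of_heq this
        subst e2
        rw [hy2]
        have := (hfeas s₂.1 s₂.2).1
        constructor <;> [linarith; linarith]
      · have hy3 : y j' t' = x j' t' := by rw [hy]; simp only [if_neg hc1, if_neg hc2]
        rw [hy3]; exact hfeas j' t'
  have hle := hopt y hyfeas (by rw [hvy]; exact hvle) (by rw [hvy]; exact hvpos)
  rw [hvy, hpy] at hle
  have hgain : q s₂.1 * δ < q s₁.1 * ε := by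
    have : q s₂.1 * δ * u₂ < q s₁.1 * ε * u₂ := by
      calc q s₂.1 * δ * u₂ = q s₂.1 * (u₂ * δ) := by ring
        _ = q s₂.1 * (u₁ * ε) := by rw [hδu]
        _ = q s₂.1 * u₁ * ε := by ring
        _ < q s₁.1 * u₂ * ε := by nlinarith
        _ = q s₁.1 * ε * u₂ := by ring
    exact lt_of_mul_lt_mul_right this (le_of_lt hu2)
  linarith
end
section
variable {m : ℕ} {k : Fin m → ℕ}

lemma exists_lam (d uu : ∀ j : Fin m, Fin (k j) → ℝ) (hu0 : ∀ j t, 0 ≤ uu j t)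
    {U b : ℝ} (hU : 0 < U) (hb : 0 < b) (q : Fin m → ℝ) (hq : ∀ j, 0 < q j)
    (x : ∀ j : Fin m, Fin (k j) → ℝ) (hx : x ∈ splcGale m k d uu U b q) :
    ∃ lam : ℝ, 0 < lam ∧
      (∀ j t, q j < lam * uu j t → x j t = d j t) ∧
      (∀ j t, lam * uu j t < q j → x j t = 0) ∧
      lam * (∑ j, ∑ t, uu j t * x j t) ≤ b := by
  obtain ⟨hfeas, hvle, hvpos, hopt⟩ := hx
  have hx' : x ∈ splcGale m k d uu U b q := ⟨hfeas, hvle, hvpos, hopt⟩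
  set v := ∑ j, ∑ t, uu j t * x j t with hv
  rcases lt_or_eq_of_le hvle with hvU | hvU
  · -- uncapped case: lam = b / v
    refine ⟨b / v, by positivity, ?_, ?_, ?_⟩
    · intro j t h
      apply opt_full d uu hb q hq x hx' hvU j t
      have e : b / v * uu j t * v = b * uu j t := by field_simp
      nlinarith [mul_lt_mul_of_pos_right h hvpos]
    · intro j t h
      apply opt_zero d uu hu0 hb q hq x hx' j t
      have e : b / v * uu j t * v = b * uu j t := by field_simp
      nlinarith [mul_lt_mul_of_pos_right h hvpos]
    · rw [div_mul_cancel₀ b (ne_of_gt hvpos)]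
  · -- capped case: v = U
    have key : ∃ lam : ℝ, lam ∈ insert (b / U)
        (((Finset.univ : Finset ((j : Fin m) × Fin (k j))).filter
            (fun s => x s.1 s.2 < d s.1 s.2 ∧ 0 < uu s.1 s.2)).image
          (fun s => q s.1 / uu s.1 s.2)) ∧
        ∀ r ∈ insert (b / U)
          (((Finset.univ : Finset ((j : Fin m) × Fin (k j))).filter
              (fun s => x s.1 s.2 < d s.1 s.2 ∧ 0 < uu s.1 s.2)).image
            (fun s => q s.1 / uu s.1 s.2)), lam ≤ r := by
      refine ⟨_, Finset.min'_mem _ (Finset.insert_nonempty _ _),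
        fun r hr => Finset.min'_le _ r hr⟩
    obtain ⟨lam, hlamF, hlamle⟩ := key
    have hlampos : 0 < lam := by
      rcases Finset.mem_insert.mp hlamF with h | h
      · rw [h]; positivity
      · obtain ⟨s, hs, he⟩ := Finset.mem_image.mp h
        obtain ⟨-, hu⟩ := (Finset.mem_filter.mp hs).2
        rw [← he]; exact div_pos (hq s.1) hu
    have hlamU : lam ≤ b / U := hlamle _ (Finset.mem_insert_self _ _)
    refine ⟨lam, hlampos, ?_, ?_, ?_⟩
    · intro j t h
      have hu : 0 < uu j t := by
        rcases le_or_gt (uu j t) 0 with h' | h'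
        · exfalso; nlinarith [hq j, mul_nonpos_of_nonneg_of_nonpos (le_of_lt hlampos) h']
        · exact h'
      by_contra hne
      have hxd : x j t < d j t := lt_of_le_of_ne (hfeas j t).2 hne
      have hmem : q j / uu j t ∈ insert (b / U)
          (((Finset.univ : Finset ((j : Fin m) × Fin (k j))).filter
              (fun s => x s.1 s.2 < d s.1 s.2 ∧ 0 < uu s.1 s.2)).image
            (fun s => q s.1 / uu s.1 s.2)) := by
        apply Finset.mem_insert_of_mem
        apply Finset.mem_image.mpr
        exact ⟨⟨j, t⟩, Finset.mem_filter.mpr ⟨Finset.mem_univ _, hxd, hu⟩, rfl⟩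
      have h2 := hlamle _ hmem
      have h3 : lam * uu j t ≤ q j := by
        rw [← div_mul_cancel₀ (q j) (ne_of_gt hu)]
        exact mul_le_mul_of_nonneg_right h2 (le_of_lt hu)
      linarith
    · intro j t h
      by_contra hne
      have hxpos : 0 < x j t := lt_of_le_of_ne (hfeas j t).1 (Ne.symm hne)
      rcases Finset.mem_insert.mp hlamF with hc | hc
      · have hzero : x j t = 0 := by
          apply opt_zero d uu hu0 hb q hq x hx' j t
          rw [← hv, hvU]
          have h4 : b / U * uu j t < q j := by rw [← hc]; exact h
          have e4 : b / U * uu j t * U = b * uu j t := by field_simp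
          nlinarith [mul_lt_mul_of_pos_right h4 hU, e4]
        exact hne hzero
      · obtain ⟨s₂, hs₂, he⟩ := Finset.mem_image.mp hc
        obtain ⟨hx2, hu2⟩ := (Finset.mem_filter.mp hs₂).2
        by_cases hss : (⟨j, t⟩ : (j : Fin m) × Fin (k j)) = s₂
        · subst hss
          have he' : q j / uu j t = lam := he
          have hu2' : 0 < uu j t := hu2
          rw [← he', div_mul_cancel₀ (q j) (ne_of_gt hu2')] at h
          exact lt_irrefl _ h
        · have hkey := opt_noexch d uu hu0 hb q hq x hx' ⟨j, t⟩ s₂ hss hxpos hx2 hu2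
          have h5 : q s₂.1 * uu j t < q j * uu s₂.1 s₂.2 := by
            have h2 : lam * uu j t * uu s₂.1 s₂.2 < q j * uu s₂.1 s₂.2 :=
              mul_lt_mul_of_pos_right h hu2
            have e : lam * uu j t * uu s₂.1 s₂.2 = q s₂.1 * uu j t := by
              rw [← he]; field_simp; try ring
            linarith [e ▸ h2]
          linarith
    · rw [hvU]
      calc lam * U ≤ b / U * U := mul_le_mul_of_nonneg_right hlamU (le_of_lt hU)
        _ = b := div_mul_cancel₀ b (ne_of_gt hU)

end
section
open Finset in
lemma exists_lam_star {ι : Type*} [Fintype ι] (a e r : ι → ℝ)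
    (ha : ∀ s, 0 ≤ a s) (he : ∀ s, 0 ≤ e s) (hr : ∀ s, 0 < r s)
    (hex : ∃ s, 0 < a s ∧ 0 < e s) {U b : ℝ} (hU : 0 < U) (hb : 0 < b) :
    ∃ lam : ℝ, 0 < lam ∧
      (∑ s ∈ Finset.univ.filter (fun s => r s < lam * a s), e s) ≤ U ∧
      lam * (∑ s ∈ Finset.univ.filter (fun s => r s < lam * a s), e s) ≤ b ∧
      min U (b / lam) ≤ (∑ s ∈ Finset.univ.filter (fun s => r s ≤ lam * a s), e s) ∧
      (∀ l : ℝ, 0 ≤ l → (∑ s ∈ Finset.univ.filter (fun s => r s < l * a s), e s) ≤ U →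
        l * (∑ s ∈ Finset.univ.filter (fun s => r s < l * a s), e s) ≤ b → l ≤ lam) := by
  classical
  set Φ : ℝ → ℝ := fun l => ∑ s ∈ Finset.univ.filter (fun s => r s < l * a s), e s with hΦ
  have hΦnn : ∀ l, 0 ≤ Φ l := fun l => Finset.sum_nonneg (fun s _ => he s)
  set A : Set ℝ := {l | 0 ≤ l ∧ Φ l ≤ U ∧ l * Φ l ≤ b} with hA
  obtain ⟨s₀, hs₀a, hs₀e⟩ := hex
  -- A is bounded above
  set B : ℝ := max (r s₀ / a s₀) (b / e s₀) with hB
  have hAbdd : ∀ l ∈ A, l ≤ B := by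
    intro l hl
    by_contra hgt
    push_neg at hgt
    have h1 : r s₀ / a s₀ < l := lt_of_le_of_lt (le_max_left _ _) hgt
    have h2 : b / e s₀ < l := lt_of_le_of_lt (le_max_right _ _) hgt
    have hmem : s₀ ∈ Finset.univ.filter (fun s => r s < l * a s) := by
      simp only [Finset.mem_filter, Finset.mem_univ, true_and]
      rw [div_lt_iff₀ hs₀a] at h1
      linarith
    have h3 : e s₀ ≤ Φ l := Finset.single_le_sum (fun s _ => he s) hmem
    have h4 : b < l * e s₀ := by rw [div_lt_iff₀ hs₀e] at h2; linarith
    obtain ⟨hl0, hlU, hlb⟩ := hl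
    nlinarith
  have hAbddAbove : BddAbove A := ⟨B, fun l hl => hAbdd l hl⟩
  -- a positive element of A
  have hT0ne : (Finset.univ.filter (fun s => 0 < a s)).Nonempty := ⟨s₀, by simp [hs₀a]⟩
  have hT0ne' : ((Finset.univ.filter (fun s => 0 < a s)).image (fun s => r s / a s)).Nonempty :=
    hT0ne.image _
  set c0 := ((Finset.univ.filter (fun s => 0 < a s)).image (fun s => r s / a s)).min' hT0ne' with hc0
  have hc0pos : 0 < c0 := by
    rw [hc0]
    apply (Finset.lt_min'_iff _ _).mpr
    intro y hy
    obtain ⟨s, hs, hys⟩ := Finset.mem_image.mp hy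
    have := (Finset.mem_filter.mp hs).2
    rw [← hys]; exact div_pos (hr s) this
  have hl0A : c0 / 2 ∈ A := by
    have hΦ0 : Φ (c0 / 2) = 0 := by
      rw [hΦ]
      apply Finset.sum_eq_zero
      intro s hs
      exfalso
      have hlt := (Finset.mem_filter.mp hs).2
      have hapos : 0 < a s := by
        rcases lt_or_ge 0 (a s) with h | h
        · exact h
        · exfalso; nlinarith [hr s, mul_nonpos_of_nonneg_of_nonpos (le_of_lt (by positivity : (0:ℝ) < c0/2)) h]
      have hmem : r s / a s ∈ (Finset.univ.filter (fun s => 0 < a s)).image (fun s => r s / a s) :=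
        Finset.mem_image.mpr ⟨s, Finset.mem_filter.mpr ⟨Finset.mem_univ _, hapos⟩, rfl⟩
      have := Finset.min'_le _ _ hmem
      rw [← hc0, le_div_iff₀ hapos] at this
      nlinarith
    exact ⟨by positivity, by rw [hΦ0]; positivity, by rw [hΦ0]; nlinarith⟩
  have hAne : A.Nonempty := ⟨c0 / 2, hl0A⟩
  set lam := sSup A with hlam
  have hlampos : 0 < lam := lt_of_lt_of_le (by positivity) (le_csSup hAbddAbove hl0A)
  -- δ₀ for left-stability
  set T1 := Finset.univ.filter (fun s => r s < lam * a s) with hT1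
  set D := insert (1:ℝ) (T1.image (fun s => lam - r s / a s)) with hD
  have hDne : D.Nonempty := Finset.insert_nonempty _ _
  set δ₀ := D.min' hDne with hδ₀
  have hapos_of_T1 : ∀ s ∈ T1, 0 < a s := by
    intro s hs
    have hlt := (Finset.mem_filter.mp hs).2
    rcases lt_or_ge 0 (a s) with h | h
    · exact h
    · exfalso; nlinarith [hr s, mul_nonpos_of_nonneg_of_nonpos (le_of_lt hlampos) h]
  have hδ₀pos : 0 < δ₀ := by
    rw [hδ₀]
    apply (Finset.lt_min'_iff _ _).mpr
    intro y hy
    rcases Finset.mem_insert.mp hy with h | h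
    · rw [h]; norm_num
    · obtain ⟨s, hs, hys⟩ := Finset.mem_image.mp h
      have hapos := hapos_of_T1 s hs
      have hlt := (Finset.mem_filter.mp hs).2
      rw [← hys]
      have : r s / a s < lam := by rw [div_lt_iff₀ hapos]; linarith
      linarith
  have hincl : ∀ l : ℝ, lam - δ₀ < l → T1 ⊆ Finset.univ.filter (fun s => r s < l * a s) := by
    intro l hl s hs
    have hapos := hapos_of_T1 s hs
    have hδle : δ₀ ≤ lam - r s / a s := by
      rw [hδ₀]
      exact Finset.min'_le _ _ (Finset.mem_insert_of_mem (Finset.mem_image_of_mem _ hs))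
    simp only [Finset.mem_filter, Finset.mem_univ, true_and]
    have : r s / a s < l := by linarith
    rw [div_lt_iff₀ hapos] at this
    linarith
  have hΦsub : ∀ l : ℝ, lam - δ₀ < l → Φ lam ≤ Φ l := by
    intro l hl
    exact Finset.sum_le_sum_of_subset_of_nonneg (hincl l hl) (fun s _ _ => he s)
  -- lam ∈ A
  have hlamA : lam ∈ A := by
    refine ⟨le_of_lt hlampos, ?_, ?_⟩
    · obtain ⟨a1, ha1A, ha1⟩ := exists_lt_of_lt_csSup hAne (show lam - δ₀ < lam by linarith)
      exact le_trans (hΦsub a1 ha1) ha1A.2.1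
    · by_contra hgt
      push_neg at hgt
      have hΦpos : 0 < Φ lam := by
        rcases lt_or_ge 0 (Φ lam) with h | h
        · exact h
        · exfalso; nlinarith
      have hc : max (lam - δ₀) (b / Φ lam) < lam := by
        apply max_lt (by linarith)
        rw [div_lt_iff₀ hΦpos]; linarith
      obtain ⟨a2, ha2A, ha2⟩ := exists_lt_of_lt_csSup hAne hc
      have h1 : Φ lam ≤ Φ a2 := hΦsub a2 (lt_of_le_of_lt (le_max_left _ _) ha2)
      have h2 : b / Φ lam < a2 := lt_of_le_of_lt (le_max_right _ _) ha2
      rw [div_lt_iff₀ hΦpos] at h2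
      obtain ⟨ha20, ha2U, ha2b⟩ := ha2A
      nlinarith
  -- the min U (b/lam) ≤ Ψ lam property
  set Ψl := ∑ s ∈ Finset.univ.filter (fun s => r s ≤ lam * a s), e s with hΨl
  have hΨnn : 0 ≤ Ψl := Finset.sum_nonneg (fun s _ => he s)
  set T2 := Finset.univ.filter (fun s => 0 < a s ∧ lam * a s < r s) with hT2
  set E := insert (1:ℝ) (T2.image (fun s => r s / a s - lam)) with hE
  have hEne : E.Nonempty := Finset.insert_nonempty _ _
  set ε₀ := E.min' hEne with hε₀
  have hε₀pos : 0 < ε₀ := by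
    rw [hε₀]
    apply (Finset.lt_min'_iff _ _).mpr
    intro y hy
    rcases Finset.mem_insert.mp hy with h | h
    · rw [h]; norm_num
    · obtain ⟨s, hs, hys⟩ := Finset.mem_image.mp h
      obtain ⟨hapos, hlt⟩ := (Finset.mem_filter.mp hs).2
      rw [← hys]
      have : lam < r s / a s := by rw [lt_div_iff₀ hapos]; linarith
      linarith
  have hincl2 : ∀ ε : ℝ, 0 < ε → ε ≤ ε₀ →
      Finset.univ.filter (fun s => r s < (lam + ε) * a s) ⊆
        Finset.univ.filter (fun s => r s ≤ lam * a s) := by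
    intro ε hε1 hε2 s hs
    have hlt := (Finset.mem_filter.mp hs).2
    have hapos : 0 < a s := by
      rcases lt_or_ge 0 (a s) with h | h
      · exact h
      · exfalso
        nlinarith [hr s, mul_nonpos_of_nonneg_of_nonpos (show (0:ℝ) ≤ lam + ε by linarith) h]
    simp only [Finset.mem_filter, Finset.mem_univ, true_and]
    by_contra hcon
    push_neg at hcon
    have hsT2 : s ∈ T2 := Finset.mem_filter.mpr ⟨Finset.mem_univ _, hapos, hcon⟩
    have hle : ε₀ ≤ r s / a s - lam := by
      rw [hε₀]
      exact Finset.min'_le _ _ (Finset.mem_insert_of_mem (Finset.mem_image_of_mem _ hsT2))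
    have : lam + ε ≤ r s / a s := by linarith
    rw [le_div_iff₀ hapos] at this
    linarith
  have hminle : min U (b / lam) ≤ Ψl := by
    by_contra hlt
    push_neg at hlt
    have hW1 : Ψl < U := lt_of_lt_of_le hlt (min_le_left _ _)
    have hW2 : lam * Ψl < b := by
      have := lt_of_lt_of_le hlt (min_le_right _ _)
      rw [lt_div_iff₀ hlampos] at this
      linarith
    set ε := min ε₀ ((b - lam * Ψl) / (2 * (Ψl + 1))) with hε
    have hεpos : 0 < ε := by
      apply lt_min hε₀pos
      exact div_pos (by linarith) (by nlinarith)
    have hΦle : Φ (lam + ε) ≤ Ψl := by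
      rw [hΦ, hΨl]
      exact Finset.sum_le_sum_of_subset_of_nonneg (hincl2 ε hεpos (min_le_left _ _))
        (fun s _ _ => he s)
    have hcond2 : (lam + ε) * Φ (lam + ε) ≤ b := by
      have h1 : (lam + ε) * Φ (lam + ε) ≤ (lam + ε) * Ψl :=
        mul_le_mul_of_nonneg_left hΦle (by linarith)
      have h2 : ε * Ψl ≤ (b - lam * Ψl) / 2 := by
        have h3 : ε ≤ (b - lam * Ψl) / (2 * (Ψl + 1)) := min_le_right _ _
        have h4 := mul_le_mul_of_nonneg_right h3 (le_of_lt (show (0:ℝ) < Ψl + 1 by nlinarith))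
        calc ε * Ψl ≤ ε * (Ψl + 1) := by nlinarith
          _ ≤ (b - lam * Ψl) / (2 * (Ψl + 1)) * (Ψl + 1) := h4
          _ = (b - lam * Ψl) / 2 := by field_simp
      nlinarith
    have hfin : lam + ε ≤ lam := by
      apply le_csSup hAbddAbove
      exact ⟨by linarith, le_of_lt (lt_of_le_of_lt hΦle hW1), hcond2⟩
    linarith
  exact ⟨lam, hlampos, hlamA.2.1, hlamA.2.2, hminle,
    fun l hl0 hlU hlb => le_csSup hAbddAbove ⟨hl0, hlU, hlb⟩⟩

end

/-- Lemma 6.1. The Gale demand system of a budget-additive SPLC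
utility (segments of lengths `d_{jt} > 0` with strictly decreasing nonnegative rates and
cap `U > 0`) satisfies the weak gross substitutes property: if prices increase
componentwise from `p` to `p'`, then for any optimal bundle `x` at `p` there is an
optimal bundle `x'` at `p'` with `x'_{jt} ≥ x_{jt}` on every segment of every good whose
price is unchanged. -/
theorem splc_gale_wgs
    (m : ℕ) (k : Fin m → ℕ) (d uu : ∀ j : Fin m, Fin (k j) → ℝ)
    (hd : ∀ j t, 0 < d j t) (huu0 : ∀ j t, 0 ≤ uu j t)
    (huu_dec : ∀ j, StrictAnti (uu j))
    (U : ℝ) (hU : 0 < U) (b : ℝ) (hb : 0 < b)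
    (p p' : Fin m → ℝ) (hp : ∀ j, 0 < p j) (hpp' : ∀ j, p j ≤ p' j)
    (x : ∀ j : Fin m, Fin (k j) → ℝ) (hx : x ∈ splcGale m k d uu U b p) :
    ∃ x' ∈ splcGale m k d uu U b p', ∀ j, p' j = p j → ∀ t, x j t ≤ x' j t := by
  have hp' : ∀ j, 0 < p' j := fun j => lt_of_lt_of_le (hp j) (hpp' j)
  obtain ⟨hfeas, hvle, hvpos, hopt⟩ := hx
  have hx' : x ∈ splcGale m k d uu U b p := ⟨hfeas, hvle, hvpos, hopt⟩
  obtain ⟨lamx, hlamx_pos, hN2, hN3, hN4⟩ := exists_lam d uu huu0 hU hb p hp x hx'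
  set v := ∑ j, ∑ t, uu j t * x j t with hv
  have hVx : v = ∑ s : (j : Fin m) × Fin (k j), uu s.1 s.2 * x s.1 s.2 :=
    sum_sum_eq (fun j t => uu j t * x j t)
  -- there is a segment with positive rate
  have hex : ∃ s : (j : Fin m) × Fin (k j), 0 < uu s.1 s.2 ∧ 0 < uu s.1 s.2 * d s.1 s.2 := by
    by_contra hcon
    push_neg at hcon
    have hzero : ∀ s : (j : Fin m) × Fin (k j), uu s.1 s.2 * x s.1 s.2 = 0 := by
      intro s
      rcases lt_or_eq_of_le (huu0 s.1 s.2) with h | h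
      · exact absurd (mul_pos h (hd s.1 s.2)) (not_lt.mpr (by linarith [hcon s h]))
      · rw [← h, zero_mul]
    rw [hVx] at hvpos
    rw [Finset.sum_eq_zero (fun s _ => hzero s)] at hvpos
    exact lt_irrefl _ hvpos
  -- get lam' from the threshold analysis at prices p'
  obtain ⟨lam', hlam'pos, hVhiU, hlamVhi, hminle, hmax⟩ :=
    exists_lam_star (ι := (j : Fin m) × Fin (k j))
      (fun s => uu s.1 s.2) (fun s => uu s.1 s.2 * d s.1 s.2) (fun s => p' s.1)
      (fun s => huu0 s.1 s.2) (fun s => mul_nonneg (huu0 s.1 s.2) (le_of_lt (hd s.1 s.2)))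
      (fun s => hp' s.1) hex hU hb
  -- lamx ≤ lam'
  have hlamle : lamx ≤ lam' := by
    apply hmax lamx (le_of_lt hlamx_pos)
    · -- Φ_{p'}(lamx) ≤ V x ≤ U
      have h1 : (∑ s ∈ Finset.univ.filter
          (fun s : (j : Fin m) × Fin (k j) => p' s.1 < lamx * uu s.1 s.2),
            uu s.1 s.2 * d s.1 s.2) ≤ v := by
        have e : ∀ s ∈ Finset.univ.filter
            (fun s : (j : Fin m) × Fin (k j) => p' s.1 < lamx * uu s.1 s.2),
              uu s.1 s.2 * d s.1 s.2 = uu s.1 s.2 * x s.1 s.2 := by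
          intro s hs
          have hlt := (Finset.mem_filter.mp hs).2
          have := hN2 s.1 s.2 (lt_of_le_of_lt (hpp' s.1) hlt)
          rw [this]
        rw [Finset.sum_congr rfl e, hVx]
        exact Finset.sum_le_sum_of_subset_of_nonneg (Finset.filter_subset _ _)
          (fun s _ _ => mul_nonneg (huu0 s.1 s.2) (hfeas s.1 s.2).1)
      linarith
    · have h1 : (∑ s ∈ Finset.univ.filter
          (fun s : (j : Fin m) × Fin (k j) => p' s.1 < lamx * uu s.1 s.2),
            uu s.1 s.2 * d s.1 s.2) ≤ v := by
        have e : ∀ s ∈ Finset.univ.filter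
            (fun s : (j : Fin m) × Fin (k j) => p' s.1 < lamx * uu s.1 s.2),
              uu s.1 s.2 * d s.1 s.2 = uu s.1 s.2 * x s.1 s.2 := by
          intro s hs
          have hlt := (Finset.mem_filter.mp hs).2
          have := hN2 s.1 s.2 (lt_of_le_of_lt (hpp' s.1) hlt)
          rw [this]
        rw [Finset.sum_congr rfl e, hVx]
        exact Finset.sum_le_sum_of_subset_of_nonneg (Finset.filter_subset _ _)
          (fun s _ _ => mul_nonneg (huu0 s.1 s.2) (hfeas s.1 s.2).1)
      nlinarith [hN4, hlamx_pos]
  -- abbreviations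
  set VH := ∑ s ∈ Finset.univ.filter
      (fun s : (j : Fin m) × Fin (k j) => p' s.1 < lam' * uu s.1 s.2),
    uu s.1 s.2 * d s.1 s.2 with hVH
  set Tie := Finset.univ.filter
      (fun s : (j : Fin m) × Fin (k j) => p' s.1 = lam' * uu s.1 s.2) with hTie
  set V' := min U (b / lam') with hV'
  set ell : ∀ j : Fin m, Fin (k j) → ℝ := fun j t => if p' j = p j then x j t else 0 with hell
  set L := ∑ s ∈ Tie, uu s.1 s.2 * ell s.1 s.2 with hL
  set M := ∑ s ∈ Tie, uu s.1 s.2 * d s.1 s.2 with hM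
  have hV'pos : 0 < V' := lt_min hU (by positivity)
  have hV'U : V' ≤ U := min_le_left _ _
  have hV'b : lam' * V' ≤ b := by
    have h1 : V' ≤ b / lam' := min_le_right _ _
    calc lam' * V' ≤ lam' * (b / lam') := mul_le_mul_of_nonneg_left h1 (le_of_lt hlam'pos)
      _ = b := mul_div_cancel₀ b (ne_of_gt hlam'pos)
  have hVHV' : VH ≤ V' := by
    apply le_min hVhiU
    rw [le_div_iff₀ hlam'pos]
    linarith [hlamVhi]
  -- V' ≤ VH + M  (i.e. V' ≤ VL)
  have hVL : (∑ s ∈ Finset.univ.filter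
      (fun s : (j : Fin m) × Fin (k j) => p' s.1 ≤ lam' * uu s.1 s.2),
        uu s.1 s.2 * d s.1 s.2) = VH + M := by
    have hsplit := Finset.sum_filter_add_sum_filter_not
      (Finset.univ.filter (fun s : (j : Fin m) × Fin (k j) => p' s.1 ≤ lam' * uu s.1 s.2))
      (fun s => p' s.1 < lam' * uu s.1 s.2)
      (fun s : (j : Fin m) × Fin (k j) => uu s.1 s.2 * d s.1 s.2)
    have e1 : (Finset.univ.filter
        (fun s : (j : Fin m) × Fin (k j) => p' s.1 ≤ lam' * uu s.1 s.2)).filter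
          (fun s => p' s.1 < lam' * uu s.1 s.2)
        = Finset.univ.filter (fun s : (j : Fin m) × Fin (k j) => p' s.1 < lam' * uu s.1 s.2) := by
      ext s
      simp only [Finset.mem_filter, Finset.mem_univ, true_and]
      exact ⟨fun h => h.2, fun h => ⟨le_of_lt h, h⟩⟩
    have e2 : (Finset.univ.filter
        (fun s : (j : Fin m) × Fin (k j) => p' s.1 ≤ lam' * uu s.1 s.2)).filter
          (fun s => ¬ p' s.1 < lam' * uu s.1 s.2) = Tie := by
      ext s
      rw [hTie]
      simp only [Finset.mem_filter, Finset.mem_univ, true_and]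
      constructor
      · rintro ⟨h1, h2⟩; exact le_antisymm h1 (not_lt.mp h2)
      · intro h; exact ⟨le_of_eq h, by rw [h]; exact lt_irrefl _⟩
    rw [e1, e2] at hsplit
    rw [← hsplit, hVH, hM]
  have hV'VL : V' ≤ VH + M := by rw [← hVL]; exact hminle
  have hRM : V' - VH ≤ M := by linarith
  -- L ≤ M
  have hellb : ∀ j t, 0 ≤ ell j t ∧ ell j t ≤ d j t := by
    intro j t
    rw [hell]
    by_cases h : p' j = p j
    · simp only [if_pos h]; exact ⟨(hfeas j t).1, (hfeas j t).2⟩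
    · simp only [if_neg h]; exact ⟨le_refl _, le_of_lt (hd j t)⟩
  have hLM : L ≤ M := by
    rw [hL, hM]
    apply Finset.sum_le_sum
    intro s _
    exact mul_le_mul_of_nonneg_left (hellb s.1 s.2).2 (huu0 s.1 s.2)
  have hL0 : 0 ≤ L := by
    rw [hL]
    apply Finset.sum_nonneg
    intro s _
    exact mul_nonneg (huu0 s.1 s.2) (hellb s.1 s.2).1
  -- L ≤ R
  have hupos_tie : ∀ s ∈ Tie, 0 < uu s.1 s.2 := by
    intro s hs
    rw [hTie] at hs
    have he := (Finset.mem_filter.mp hs).2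
    rcases lt_or_ge 0 (uu s.1 s.2) with h | h
    · exact h
    · exfalso
      nlinarith [hp' s.1, mul_nonpos_of_nonneg_of_nonpos (le_of_lt hlam'pos) h]
  have hLR : L ≤ V' - VH := by
    rcases lt_or_eq_of_le hlamle with hlt | heq
    · -- lamx < lam' : L = 0
      have hL0' : L = 0 := by
        rw [hL]
        apply Finset.sum_eq_zero
        intro s hs
        have hu := hupos_tie s hs
        have he : p' s.1 = lam' * uu s.1 s.2 := by
          rw [hTie] at hs; exact (Finset.mem_filter.mp hs).2
        by_cases hpe : p' s.1 = p s.1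
        · have hx0 : x s.1 s.2 = 0 := by
            apply hN3 s.1 s.2
            calc lamx * uu s.1 s.2 < lam' * uu s.1 s.2 := by nlinarith
              _ = p' s.1 := he.symm
              _ = p s.1 := hpe
          rw [hell]
          simp only [if_pos hpe, hx0, mul_zero]
        · rw [hell]
          simp only [if_neg hpe, mul_zero]
      rw [hL0']
      linarith
    · -- lamx = lam'
      have hvV' : v ≤ V' := by
        apply le_min hvle
        rw [le_div_iff₀ hlam'pos]
        calc v * lam' = lamx * v := by rw [heq]; ring
          _ ≤ b := hN4
      have hkey : VH + L ≤ v := by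
        have hsplit := Finset.sum_filter_add_sum_filter_not
          (Finset.univ : Finset ((j : Fin m) × Fin (k j)))
          (fun s => p' s.1 < lam' * uu s.1 s.2)
          (fun s : (j : Fin m) × Fin (k j) => uu s.1 s.2 * x s.1 s.2)
        have e1 : (∑ s ∈ Finset.univ.filter
            (fun s : (j : Fin m) × Fin (k j) => p' s.1 < lam' * uu s.1 s.2),
              uu s.1 s.2 * x s.1 s.2) = VH := by
          rw [hVH]
          apply Finset.sum_congr rfl
          intro s hs
          have hlt := (Finset.mem_filter.mp hs).2
          have hxd : x s.1 s.2 = d s.1 s.2 := by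
            apply hN2 s.1 s.2
            calc p s.1 ≤ p' s.1 := hpp' s.1
              _ < lam' * uu s.1 s.2 := hlt
              _ = lamx * uu s.1 s.2 := by rw [heq]
          rw [hxd]
        have e2 : L ≤ ∑ s ∈ Finset.univ.filter
            (fun s : (j : Fin m) × Fin (k j) => ¬ p' s.1 < lam' * uu s.1 s.2),
              uu s.1 s.2 * x s.1 s.2 := by
          have hsub : Tie ⊆ Finset.univ.filter
              (fun s : (j : Fin m) × Fin (k j) => ¬ p' s.1 < lam' * uu s.1 s.2) := by
            intro s hs
            rw [hTie] at hs
            have he := (Finset.mem_filter.mp hs).2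
            simp only [Finset.mem_filter, Finset.mem_univ, true_and]
            rw [he]; exact lt_irrefl _
          calc L ≤ ∑ s ∈ Tie, uu s.1 s.2 * x s.1 s.2 := by
                rw [hL]
                apply Finset.sum_le_sum
                intro s _
                apply mul_le_mul_of_nonneg_left _ (huu0 s.1 s.2)
                rw [hell]
                by_cases hpe : p' s.1 = p s.1
                · simp only [if_pos hpe]; exact le_refl _
                · simp only [if_neg hpe]; exact (hfeas s.1 s.2).1
            _ ≤ _ := Finset.sum_le_sum_of_subset_of_nonneg hsub
                (fun s _ _ => mul_nonneg (huu0 s.1 s.2) (hfeas s.1 s.2).1)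
        have : VH + L ≤ (∑ s ∈ Finset.univ.filter
            (fun s : (j : Fin m) × Fin (k j) => p' s.1 < lam' * uu s.1 s.2),
              uu s.1 s.2 * x s.1 s.2)
            + ∑ s ∈ Finset.univ.filter
            (fun s : (j : Fin m) × Fin (k j) => ¬ p' s.1 < lam' * uu s.1 s.2),
              uu s.1 s.2 * x s.1 s.2 := by
          rw [e1]; linarith
        rw [hsplit] at this
        rw [hVx]
        exact this
      linarith
  have hR0 : 0 ≤ V' - VH := by linarith
  -- θ
  set θ : ℝ := if hc : L < M then (V' - VH - L) / (M - L) else 0 with hθ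
  have hθ0 : 0 ≤ θ := by
    rw [hθ]
    split
    · apply div_nonneg (by linarith) (by linarith)
    · exact le_refl _
  have hθ1 : θ ≤ 1 := by
    rw [hθ]
    split
    · rename_i hc
      rw [div_le_one (by linarith)]
      linarith
    · norm_num
  have hθML : θ * (M - L) = V' - VH - L := by
    rw [hθ]
    split
    · rename_i hc
      exact div_mul_cancel₀ _ (ne_of_gt (by linarith))
    · rename_i hc
      have hML : M = L := le_antisymm (not_lt.mp hc) hLM
      have h0 : V' - VH - L = 0 := by
        have h1 := hRM
        have h2 := hLR
        linarith [hML.le, hML.ge]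
      rw [h0, hML]; ring
  -- the new bundle
  clear_value θ
  set x' : ∀ j : Fin m, Fin (k j) → ℝ := fun j t =>
    if p' j < lam' * uu j t then d j t
    else if p' j = lam' * uu j t then ell j t + θ * (d j t - ell j t)
    else 0 with hx'def
  -- x' is feasible
  have hx'feas : ∀ j t, 0 ≤ x' j t ∧ x' j t ≤ d j t := by
    intro j t
    rw [hx'def]
    by_cases h1 : p' j < lam' * uu j t
    · simp only [if_pos h1]
      exact ⟨le_of_lt (hd j t), le_refl _⟩
    · by_cases h2 : p' j = lam' * uu j t
      · simp only [if_neg h1, if_pos h2]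
        obtain ⟨he1, he2⟩ := hellb j t
        have hm1 := mul_nonneg hθ0 (show (0:ℝ) ≤ d j t - ell j t by linarith)
        have hm2 := mul_nonneg (show (0:ℝ) ≤ 1 - θ by linarith)
          (show (0:ℝ) ≤ d j t - ell j t by linarith)
        have hr : (1 - θ) * (d j t - ell j t)
            = d j t - (ell j t + θ * (d j t - ell j t)) := by ring
        constructor
        · linarith
        · linarith
      · simp only [if_neg h1, if_neg h2]
        exact ⟨le_refl _, le_of_lt (hd j t)⟩
  -- utility of x'
  have hVx' : ∑ j, ∑ t, uu j t * x' j t = V' := by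
    rw [sum_sum_eq (fun j t => uu j t * x' j t)]
    have hsplit := Finset.sum_filter_add_sum_filter_not
      (Finset.univ : Finset ((j : Fin m) × Fin (k j)))
      (fun s => p' s.1 < lam' * uu s.1 s.2)
      (fun s : (j : Fin m) × Fin (k j) => uu s.1 s.2 * x' s.1 s.2)
    rw [← hsplit]
    have e1 : (∑ s ∈ Finset.univ.filter
        (fun s : (j : Fin m) × Fin (k j) => p' s.1 < lam' * uu s.1 s.2),
          uu s.1 s.2 * x' s.1 s.2) = VH := by
      rw [hVH]
      apply Finset.sum_congr rfl
      intro s hs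
      have hlt := (Finset.mem_filter.mp hs).2
      rw [hx'def]
      simp only [if_pos hlt]
    have hsplit2 := Finset.sum_filter_add_sum_filter_not
      (Finset.univ.filter (fun s : (j : Fin m) × Fin (k j) => ¬ p' s.1 < lam' * uu s.1 s.2))
      (fun s => p' s.1 = lam' * uu s.1 s.2)
      (fun s : (j : Fin m) × Fin (k j) => uu s.1 s.2 * x' s.1 s.2)
    have e2 : (Finset.univ.filter
        (fun s : (j : Fin m) × Fin (k j) => ¬ p' s.1 < lam' * uu s.1 s.2)).filter
          (fun s => p' s.1 = lam' * uu s.1 s.2) = Tie := by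
      ext s
      rw [hTie]
      simp only [Finset.mem_filter, Finset.mem_univ, true_and]
      constructor
      · rintro ⟨-, h2⟩; exact h2
      · intro h; exact ⟨by rw [h]; exact lt_irrefl _, h⟩
    have e3 : (∑ s ∈ (Finset.univ.filter
        (fun s : (j : Fin m) × Fin (k j) => ¬ p' s.1 < lam' * uu s.1 s.2)).filter
          (fun s => ¬ p' s.1 = lam' * uu s.1 s.2),
            uu s.1 s.2 * x' s.1 s.2) = 0 := by
      apply Finset.sum_eq_zero
      intro s hs
      obtain ⟨hs1, hs2⟩ := Finset.mem_filter.mp hs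
      have hs1' := (Finset.mem_filter.mp hs1).2
      rw [hx'def]
      simp only [if_neg hs1', if_neg hs2, mul_zero]
    have e4 : (∑ s ∈ Tie, uu s.1 s.2 * x' s.1 s.2) = L + θ * (M - L) := by
      have : ∀ s ∈ Tie, uu s.1 s.2 * x' s.1 s.2
          = uu s.1 s.2 * ell s.1 s.2
            + θ * (uu s.1 s.2 * d s.1 s.2 - uu s.1 s.2 * ell s.1 s.2) := by
        intro s hs
        have he : p' s.1 = lam' * uu s.1 s.2 := by
          rw [hTie] at hs; exact (Finset.mem_filter.mp hs).2
        have hne : ¬ p' s.1 < lam' * uu s.1 s.2 := by rw [he]; exact lt_irrefl _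
        rw [hx'def]
        simp only [if_neg hne, if_pos he]
        ring
      rw [Finset.sum_congr rfl this, Finset.sum_add_distrib, ← Finset.mul_sum,
        Finset.sum_sub_distrib, ← hL, ← hM]
    rw [e1, ← hsplit2, e2, e3, e4, hθML]
    ring
  -- x' is optimal at p'
  have hx'mem : x' ∈ splcGale m k d uu U b p' := by
    apply kkt_sufficient d uu hU hb p' x' lam' (le_of_lt hlam'pos) hx'feas
      (by rw [hVx']; exact hV'U) (by rw [hVx']; exact hV'pos)
    · intro j t h
      rw [hx'def]; simp only [if_pos h]
    · intro j t h
      rw [hx'def]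
      have hne2 : ¬ p' j = lam' * uu j t := by
        intro hh; rw [hh] at h; exact lt_irrefl _ h
      simp only [if_neg (asymm h), if_neg hne2]
    · rw [hVx']; exact hV'b
    · rw [hVx']
      intro hlt
      have : V' = b / lam' := by
        rcases min_cases U (b / lam') with ⟨h1, -⟩ | ⟨h1, -⟩
        · exfalso; rw [hV'] at hlt; rw [h1] at hlt; exact lt_irrefl _ hlt
        · rw [hV']; exact h1
      rw [this, mul_div_cancel₀ b (ne_of_gt hlam'pos)]
  refine ⟨x', hx'mem, ?_⟩
  -- monotonicity on goods with unchanged price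
  intro j hpe t
  rw [hx'def]
  by_cases h1 : p' j < lam' * uu j t
  · simp only [if_pos h1]; exact (hfeas j t).2
  · by_cases h2 : p' j = lam' * uu j t
    · simp only [if_neg h1, if_pos h2]
      have hellx : ell j t = x j t := by rw [hell]; simp only [if_pos hpe]
      rw [hellx]
      nlinarith [(hfeas j t).2, hθ0]
    · simp only [if_neg h1, if_neg h2]
      have hx0 : x j t = 0 := by
        apply hN3 j t
        have hlt : lam' * uu j t < p' j := lt_of_le_of_ne (not_lt.mp h1) (Ne.symm h2)
        calc lamx * uu j t ≤ lam' * uu j t :=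
            mul_le_mul_of_nonneg_right hlamle (huu0 j t)
          _ < p' j := hlt
          _ = p j := hpe
      rw [hx0]
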